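/- Let k be a field, C a k-linear, Hom-finite triangulated category with a Serre functor S, and X a rigid cluster tilting subcategory of C. Then S(X) is contained in X[2]: for every object X of X there exists an object X' of X with S(X) ≅ X'[2]. -/
import Mathlib


open CategoryTheory CategoryTheory.Limits CategoryTheory.Pretriangulated

universe v u

namespace ClusterNote

/-- A Serre functor on a `k`-linear category `C`: a `k`-linear autoequivalence `S`
with bifunctorial isomorphisms `Hom(A, B) ≅ D Hom(B, S A)`. -/
structure SerreFunctor (k : Type*) [Field k] (C : Type u) [Category.{v} C]
    [Preadditive C] [Linear k C] where
  S : C ⥤ C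
  additive : S.Additive
  linear : S.Linear k
  isEquivalence : S.IsEquivalence
  serre : ∀ A B : C, (A ⟶ B) ≃ₗ[k] Module.Dual k (B ⟶ S.obj A)
  serre_natural_left : ∀ ⦃A' A B : C⦄ (u : A' ⟶ A) (f : A ⟶ B) (φ : B ⟶ S.obj A'),
    serre A' B (u ≫ f) φ = serre A B f (φ ≫ S.map u)
  serre_natural_right : ∀ ⦃A B B' : C⦄ (f : A ⟶ B) (v : B ⟶ B') (ψ : B' ⟶ S.obj A),
    serre A B' (f ≫ v) ψ = serre A B f (v ≫ ψ)

variable {C : Type u} [Category.{v} C]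

/-- A morphism factors through an object of the subcategory `X`. -/
def FactorsThru (X : Set C) {A B : C} (f : A ⟶ B) : Prop :=
  ∃ Z ∈ X, ∃ (g : A ⟶ Z) (h : Z ⟶ B), g ≫ h = f

/-- `X` contains all zero objects. -/
def ContainsZero (X : Set C) : Prop := ∀ Z : C, IsZero Z → Z ∈ X

/-- `X` is closed under retracts (direct summands); this also entails closure
under isomorphisms. -/
def ClosedUnderRetracts (X : Set C) : Prop :=
  ∀ ⦃A P : C⦄ (i : A ⟶ P) (p : P ⟶ A), i ≫ p = 𝟙 A → P ∈ X → A ∈ X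

section Preadd
variable [Preadditive C]

/-- `X` is closed under finite direct sums (stated via binary biproduct data). -/
def ClosedUnderBiprod (X : Set C) : Prop :=
  ∀ ⦃A B P : C⦄ (iA : A ⟶ P) (iB : B ⟶ P) (pA : P ⟶ A) (pB : P ⟶ B),
    iA ≫ pA = 𝟙 A → iB ≫ pB = 𝟙 B → iA ≫ pB = 0 → iB ≫ pA = 0 →
    pA ≫ iA + pB ≫ iB = 𝟙 P → A ∈ X → B ∈ X → P ∈ X

/-- `X` is a full additive subcategory, closed under isomorphisms and direct summands. -/
def GoodSub (X : Set C) : Prop :=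
  ContainsZero X ∧ ClosedUnderRetracts X ∧ ClosedUnderBiprod X

/-- The ideal relation on morphisms: `f ~ g` iff `f - g` factors through an object of `X`. -/
def xRel (X : Set C) : HomRel C := fun {A B : C} (f g : A ⟶ B) => FactorsThru X (f - g)

end Preadd

/-- `g : X₀ ⟶ M` is a right `X`-approximation of `M`. -/
def IsRightApprox (X : Set C) {X₀ M : C} (g : X₀ ⟶ M) : Prop :=
  X₀ ∈ X ∧ ∀ Z ∈ X, ∀ f : Z ⟶ M, ∃ h : Z ⟶ X₀, h ≫ g = f

/-- `X` is contravariantly finite in `C`. -/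
def ContravariantlyFinite (X : Set C) : Prop :=
  ∀ M : C, ∃ (X₀ : C) (g : X₀ ⟶ M), IsRightApprox X g

/-- `g : M ⟶ X₀` is a left `X`-approximation of `M`. -/
def IsLeftApprox (X : Set C) {M X₀ : C} (g : M ⟶ X₀) : Prop :=
  X₀ ∈ X ∧ ∀ Z ∈ X, ∀ f : M ⟶ Z, ∃ h : X₀ ⟶ Z, g ≫ h = f

/-- `X` is covariantly finite in `C`. -/
def CovariantlyFinite (X : Set C) : Prop :=
  ∀ M : C, ∃ (X₀ : C) (g : M ⟶ X₀), IsLeftApprox X g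

section Shifted
variable [Preadditive C] [HasShift C ℤ]

/-- `X` is rigid: `Hom(X, X'[1]) = 0`. -/
def Rigid (X : Set C) : Prop :=
  ∀ A ∈ X, ∀ B ∈ X, ∀ f : A ⟶ B⟦(1 : ℤ)⟧, f = 0

/-- `X` is a cluster tilting subcategory. -/
def ClusterTilting (X : Set C) : Prop :=
  ContravariantlyFinite X ∧ CovariantlyFinite X ∧
    (∀ M : C, M ∈ X ↔ ∀ Z ∈ X, ∀ f : Z ⟶ M⟦(1 : ℤ)⟧, f = 0) ∧
    (∀ M : C, M ∈ X ↔ ∀ Z ∈ X, ∀ f : M ⟶ Z⟦(1 : ℤ)⟧, f = 0)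

end Shifted

section Preadd2
variable [Preadditive C]

/-- An object is indecomposable: it is nonzero and admits no nontrivial idempotent
endomorphism. -/
def Indecomp (A : C) : Prop :=
  ¬ IsZero A ∧ ∀ e : A ⟶ A, e ≫ e = e → e = 0 ∨ e = 𝟙 A

end Preadd2

section Tri
variable [HasZeroObject C] [Preadditive C] [HasShift C ℤ]
  [∀ n : ℤ, (shiftFunctor C n).Additive] [Pretriangulated C]

/-- `A ⟶ B ⟶ N ⟶ A[1]` is an Auslander-Reiten triangle. -/
def IsARTriangle {A B N : C} (u : A ⟶ B) (v : B ⟶ N) (w : N ⟶ A⟦(1 : ℤ)⟧) : Prop :=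
  (Triangle.mk u v w ∈ distTriang C) ∧ Indecomp A ∧ Indecomp N ∧ w ≠ 0 ∧
    ∀ ⦃Y : C⦄ (f : Y ⟶ N), ¬ IsSplitEpi f → ∃ f' : Y ⟶ B, f' ≫ v = f

end Tri


section SerreShift

variable {k : Type*} [Field k] [Preadditive C] [Linear k C] [HasShift C ℤ]

/-- `S(X) = X[2]`. -/
def SerreShiftTwo (T : SerreFunctor k C) (X : Set C) : Prop :=
  (∀ A ∈ X, ∃ A' ∈ X, Nonempty (T.S.obj A ≅ A'⟦(2 : ℤ)⟧)) ∧
  (∀ A ∈ X, ∃ A'' ∈ X, Nonempty (A⟦(2 : ℤ)⟧ ≅ T.S.obj A''))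

end SerreShift


/-- If `X` is a rigid cluster tilting subcategory of a triangulated category with Serre
functor `S`, then `S(X) ⊆ X[2]`. -/
theorem serre_sub_shift_two_of_cluster_tilting {C : Type u} [Category.{v} C] [Limits.HasZeroObject C] [Preadditive C]
    [HasShift C ℤ] [∀ n : ℤ, (shiftFunctor C n).Additive] [Pretriangulated C]
    [IsTriangulated C]
    {k : Type*} [Field k] [Linear k C] [∀ A B : C, FiniteDimensional k (A ⟶ B)]
    (T : SerreFunctor k C) (X : Set C) (hX : GoodSub X)
    (hrig : Rigid X) (hct : ClusterTilting X) :
    ∀ A ∈ X, ∃ A' ∈ X, Nonempty (T.S.obj A ≅ A'⟦(2 : ℤ)⟧) := by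
  intro A hA
  refine ⟨(T.S.obj A)⟦(-2 : ℤ)⟧, ?_, ⟨((shiftFunctorCompIsoId C (-2 : ℤ) (2 : ℤ)
    (by norm_num)).symm.app (T.S.obj A))⟩⟩
  refine (hct.2.2.1 _).mpr (fun Z hZ f => ?_)
  -- Hom(Z[1], S A) is trivial since Hom(A, Z[1]) = 0 by rigidity and Serre duality
  haveI hsub : Subsingleton (A ⟶ Z⟦(1 : ℤ)⟧) :=
    ⟨fun a b => by rw [hrig A hA Z hZ a, hrig A hA Z hZ b]⟩
  haveI hdual : Subsingleton (Module.Dual k (Z⟦(1 : ℤ)⟧ ⟶ T.S.obj A)) :=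
    (T.serre A (Z⟦(1 : ℤ)⟧)).toEquiv.symm.subsingleton
  haveI hV : Subsingleton (Z⟦(1 : ℤ)⟧ ⟶ T.S.obj A) := by
    constructor
    intro a b
    have := (Module.evalEquiv k (Z⟦(1 : ℤ)⟧ ⟶ T.S.obj A)).injective
      (Subsingleton.elim _ _ : Module.evalEquiv k _ a = Module.evalEquiv k _ b)
    exact this
  -- transport f to a morphism Z[1] ⟶ S A
  set e1 := (shiftFunctorAdd' C (-2 : ℤ) (1 : ℤ) (-1 : ℤ) (by norm_num)).symm.app
    (T.S.obj A) with he1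
  set g : Z ⟶ (T.S.obj A)⟦(-1 : ℤ)⟧ := f ≫ e1.hom with hg
  have hg0 : g = 0 := by
    have h1 : (shiftFunctor C (1 : ℤ)).map g ≫
        (shiftFunctorCompIsoId C (-1 : ℤ) (1 : ℤ) (by norm_num)).hom.app (T.S.obj A) = 0 :=
      @Subsingleton.elim _ hV _ _
    rw [← zero_comp] at h1
    have h2 : (shiftFunctor C (1 : ℤ)).map g = 0 := (cancel_mono _).mp h1
    exact (shiftFunctor C (1 : ℤ)).map_injective (by rw [h2, Functor.map_zero])
  have hf : f = (f ≫ e1.hom) ≫ e1.inv := by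
    rw [Category.assoc, e1.hom_inv_id]; exact (Category.comp_id f).symm
  rw [hf, ← hg, hg0, zero_comp]

end ClusterNote
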